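/- The set {f_i − g_i : i ∈ D_Q} is a basis of the subspace U; in particular dim_k U = |D_Q|. (This is the abstract form of Lemma 'gamma.basis': {f_F − g_F : F ∈ Δ(Q)} is a basis of the image of I_L in Λ[K].) -/

import Mathlib

/-- Abstract form of Lemma `gamma.basis`:  the set `{f i − g i : i ∈ D_Q}` is a basis of the
subspace `U`; in particular `dim U = |D_Q|`. -/
theorem gamma_basis {k V ι : Type*} [Field k] [AddCommGroup V] [Module k V]
    [Fintype ι] [LinearOrder ι]
    (f : Module.Basis ι k V) (U : Submodule k V)
    (DL DQ : Set ι)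
    (hDL : DL = {i : ι | f i ∉ U ⊔ Submodule.span k (f '' {j : ι | j < i})})
    (hDQ : DQ = DLᶜ)
    (g : ι → V)
    (hg : ∀ i ∈ DQ, g i ∈ Submodule.span k (f '' {j : ι | j ∈ DL ∧ j < i}) ∧ f i - g i ∈ U) :
    LinearIndependent k (fun i : DQ => f i - g i) ∧
    Submodule.span k ((fun i : ι => f i - g i) '' DQ) = U ∧
    Module.finrank k U = DQ.ncard := by
  classical
  -- coordinates of g i vanish outside DL
  have hgsupp : ∀ i ∈ DQ, (↑(f.repr (g i)).support : Set ι) ⊆ DL := by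
    intro i hi
    have h2 : g i ∈ Submodule.span k (f '' DL) :=
      Submodule.span_mono (Set.image_mono (fun j hj => hj.1)) (hg i hi).1
    exact f.mem_span_image.mp h2
  have hrepr : ∀ i ∈ DQ, ∀ j ∈ DQ, f.repr (f i - g i) j = (if j = i then 1 else 0) := by
    intro i hi j hj
    have hjg : f.repr (g i) j = 0 := by
      by_contra h
      exact (hDQ ▸ hj) (hgsupp i hi (Finsupp.mem_support_iff.mpr h))
    rw [map_sub, Finsupp.sub_apply, f.repr_self, hjg, sub_zero, Finsupp.single_apply]
    simp [eq_comm]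
  -- any element of U with repr supported on DL is zero
  have hB : ∀ w ∈ U, (↑(f.repr w).support : Set ι) ⊆ DL → w = 0 := by
    intro w hw hsupp
    by_contra hne
    have hsne : (f.repr w).support.Nonempty := by
      rw [Finsupp.support_nonempty_iff]
      simpa using hne
    set i := (f.repr w).support.max' hsne with hidef
    have himem : i ∈ (f.repr w).support := (f.repr w).support.max'_mem hsne
    have hiDL : i ∈ DL := hsupp himem
    have hci : f.repr w i ≠ 0 := Finsupp.mem_support_iff.mp himem
    have hrestspan : w - (f.repr w i) • f i ∈ Submodule.span k (f '' {j : ι | j < i}) := by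
      rw [Module.Basis.mem_span_image]
      intro j hj
      simp only [Finset.mem_coe, Finsupp.mem_support_iff, map_sub, map_smul,
        Finsupp.sub_apply, Finsupp.smul_apply, f.repr_self, Finsupp.single_apply,
        smul_eq_mul] at hj
      by_cases hji : j = i
      · subst hji; simp at hj
      · have hjsupp : j ∈ (f.repr w).support := by
          rw [Finsupp.mem_support_iff]
          intro h; apply hj
          rw [h, if_neg (fun h' => hji h'.symm), mul_zero, sub_zero]
        exact lt_of_le_of_ne ((f.repr w).support.le_max' j hjsupp) hji
    have hfiU : f i ∈ U ⊔ Submodule.span k (f '' {j : ι | j < i}) := by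
      have h1 : (f.repr w i) • f i ∈ U ⊔ Submodule.span k (f '' {j : ι | j < i}) := by
        have : (f.repr w i) • f i = w - (w - (f.repr w i) • f i) := by abel
        rw [this]
        exact sub_mem (Submodule.mem_sup_left hw) (Submodule.mem_sup_right hrestspan)
      have := Submodule.smul_mem _ (f.repr w i)⁻¹ h1
      rwa [smul_smul, inv_mul_cancel₀ hci, one_smul] at this
    exact (hDL ▸ hiDL) hfiU
  -- linear independence
  have hLI : LinearIndependent k (fun i : DQ => f i - g i) := by
    rw [linearIndependent_iff']
    intro s c hsum i hi
    have hc := congrArg (fun v => f.repr v (↑i : ι)) hsum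
    simp only [map_sum, map_smul, Finsupp.coe_finset_sum, Finset.sum_apply,
      Finsupp.coe_smul, Pi.smul_apply, map_zero, Finsupp.coe_zero, Pi.zero_apply,
      smul_eq_mul] at hc
    rw [Finset.sum_eq_single i] at hc
    · rw [hrepr i i.2 i i.2, if_pos rfl, mul_one] at hc
      exact hc
    · intro j hj hji
      rw [hrepr j j.2 i i.2, if_neg (fun h => hji (Subtype.ext h).symm), mul_zero]
    · intro h; exact absurd hi h
  -- spanning
  have hsub : Submodule.span k ((fun i : ι => f i - g i) '' DQ) ≤ U := by
    rw [Submodule.span_le]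
    rintro _ ⟨i, hi, rfl⟩
    exact (hg i hi).2
  have hsup : U ≤ Submodule.span k ((fun i : ι => f i - g i) '' DQ) := by
    intro u hu
    set s : Finset ι := Finset.univ.filter (· ∈ DQ) with hs
    set u' : V := ∑ i ∈ s, f.repr u i • (f i - g i) with hu'def
    have hu'span : u' ∈ Submodule.span k ((fun i : ι => f i - g i) '' DQ) := by
      apply Submodule.sum_mem
      intro i hi
      exact Submodule.smul_mem _ _ (Submodule.subset_span
        ⟨i, (Finset.mem_filter.mp hi).2, rfl⟩)
    have hwU : u - u' ∈ U := sub_mem hu (hsub hu'span)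
    have hwsupp : (↑(f.repr (u - u')).support : Set ι) ⊆ DL := by
      intro j hj
      by_contra hjDL
      have hjDQ : j ∈ DQ := by rw [hDQ]; exact hjDL
      apply Finsupp.mem_support_iff.mp hj
      rw [map_sub, Finsupp.sub_apply, hu'def, map_sum, Finsupp.coe_finset_sum,
        Finset.sum_apply]
      have hjs : j ∈ s := Finset.mem_filter.mpr ⟨Finset.mem_univ j, hjDQ⟩
      rw [Finset.sum_eq_single j]
      · rw [map_smul, Finsupp.smul_apply, hrepr j hjDQ j hjDQ, if_pos rfl,
          smul_eq_mul, mul_one, sub_self]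
      · intro i hi hij
        rw [map_smul, Finsupp.smul_apply, hrepr i (Finset.mem_filter.mp hi).2 j hjDQ,
          if_neg (fun h => hij h.symm), smul_eq_mul, mul_zero]
      · intro h; exact absurd hjs h
    have : u - u' = 0 := hB _ hwU hwsupp
    have : u = u' := by rwa [sub_eq_zero] at this
    rw [this]; exact hu'span
  have hspan : Submodule.span k ((fun i : ι => f i - g i) '' DQ) = U :=
    le_antisymm hsub hsup
  -- basis of U
  refine ⟨hLI, hspan, ?_⟩
  let e : DQ → U := fun i => ⟨f i - g i, (hg i i.2).2⟩
  have hLIe : LinearIndependent k e := by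
    apply LinearIndependent.of_comp U.subtype
    exact hLI
  have hspane : ⊤ ≤ Submodule.span k (Set.range e) := by
    have hmap : Submodule.map U.subtype (Submodule.span k (Set.range e)) =
        Submodule.map U.subtype ⊤ := by
      rw [Submodule.map_span, Submodule.map_top, Submodule.range_subtype]
      rw [← Set.range_comp]
      have he : (U.subtype ∘ e) = fun i : DQ => f ↑i - g ↑i := rfl
      have him : (Set.range fun i : DQ => f ↑i - g ↑i) = (fun i : ι => f i - g i) '' DQ := by
        ext x
        constructor
        · rintro ⟨i, rfl⟩; exact ⟨i, i.2, rfl⟩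
        · rintro ⟨i, hi, rfl⟩; exact ⟨⟨i, hi⟩, rfl⟩
      rw [he, him]
      exact hspan
    exact (Submodule.map_injective_of_injective U.injective_subtype hmap).symm.le
  let B : Module.Basis DQ k U := Module.Basis.mk hLIe hspane
  rw [Module.finrank_eq_card_basis B, ← Nat.card_coe_set_eq, Nat.card_eq_fintype_card]
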